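/- Let V : Ω → [0,+∞] be p-quasi upper semicontinuous and μ = V·ℒ^N. Then V_μ = V ℒ^N-a.e. in Ω, where V_μ is the density of μ over its set of σ-finiteness A_μ extended by +∞ off A_μ. -/

import Mathlib

open MeasureTheory Filter Topology ENNReal

/-- The `p`-capacity of a set `S ⊆ ℝ^N`, defined via the Sobolev-type energy of
admissible functions `0 ≤ u ≤ 1` equal to `1` on an open neighborhood of `S`
(with `inf ∅ = +∞`). -/
noncomputable def pCap (N : ℕ) (p : ℝ) (S : Set (EuclideanSpace ℝ (Fin N))) : ℝ≥0∞ :=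
  ⨅ (u : EuclideanSpace ℝ (Fin N) → ℝ) (_ : Differentiable ℝ u)
    (_ : ∀ x, 0 ≤ u x ∧ u x ≤ 1)
    (_ : ∃ O : Set (EuclideanSpace ℝ (Fin N)), IsOpen O ∧ S ⊆ O ∧ ∀ x ∈ O, u x = 1),
    ∫⁻ x, ENNReal.ofReal (‖fderiv ℝ u x‖ ^ p + |u x| ^ p)

/-- A set `A` is `p`-quasi open if for every `ε > 0` there is an open set `ω` of
`p`-capacity smaller than `ε` with `A ∪ ω` open. -/
def IsQuasiOpen (N : ℕ) (p : ℝ) (A : Set (EuclideanSpace ℝ (Fin N))) : Prop :=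
  ∀ ε : ℝ≥0∞, 0 < ε → ∃ ω : Set (EuclideanSpace ℝ (Fin N)),
    IsOpen ω ∧ pCap N p ω < ε ∧ IsOpen (A ∪ ω)

attribute [local instance] Classical.propDecidable

/-- A set `W` is `p`-finely open if the Wiener-type integral criterion holds at
every point of `W`. -/
def IsFinelyOpen (N : ℕ) (p : ℝ) (W : Set (EuclideanSpace ℝ (Fin N))) : Prop :=
  ∀ x ∈ W,
    (∫⁻ r in Set.Ioo (0 : ℝ) 1,
      ((pCap N p (Metric.ball x r \ W) / ENNReal.ofReal (r ^ ((N : ℝ) - p))) ^ (1 / (p - 1)))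
        / ENNReal.ofReal r) ≠ ⊤

/-- The set of σ-finiteness `A_μ` of a measure `μ`: the union of all Borel
`p`-finely open sets of finite `μ`-measure. -/
def sigmaSet (N : ℕ) (p : ℝ) (μ : Measure (EuclideanSpace ℝ (Fin N))) :
    Set (EuclideanSpace ℝ (Fin N)) :=
  ⋃₀ {W | MeasurableSet W ∧ IsFinelyOpen N p W ∧ μ W < ⊤}

/-- Admissible functions for the torsion problem in `Ω`: a surrogate for
`W^{1,p}₀(Ω)`. -/
def TorsAdm (N : ℕ) (p : ℝ) (Ω : Set (EuclideanSpace ℝ (Fin N)))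
    (w : EuclideanSpace ℝ (Fin N) → ℝ) : Prop :=
  Differentiable ℝ w ∧ (∀ x ∉ Ω, w x = 0) ∧
    MeasureTheory.MemLp w (ENNReal.ofReal p) ∧
    MeasureTheory.MemLp (fun x => fderiv ℝ w x) (ENNReal.ofReal p)

/-- The torsion energy `J_{Ω,μ}(v) = (1/p)∫|∇v|^p + (1/p)∫|v|^p dμ − ∫_Ω v`. -/
noncomputable def torsEnergy (N : ℕ) (p : ℝ) (μ : Measure (EuclideanSpace ℝ (Fin N)))
    (Ω : Set (EuclideanSpace ℝ (Fin N))) (w : EuclideanSpace ℝ (Fin N) → ℝ) : ℝ :=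
  (1 / p) * (∫ x, ‖fderiv ℝ w x‖ ^ p) +
    (1 / p) * (∫⁻ x, ENNReal.ofReal (|w x| ^ p) ∂μ).toReal - ∫ x in Ω, w x

/-- `w` is the torsion function of `μ` in `Ω`. -/
def IsTorsion (N : ℕ) (p : ℝ) (μ : Measure (EuclideanSpace ℝ (Fin N)))
    (Ω : Set (EuclideanSpace ℝ (Fin N))) (w : EuclideanSpace ℝ (Fin N) → ℝ) : Prop :=
  TorsAdm N p Ω w ∧ (∫⁻ x, ENNReal.ofReal (|w x| ^ p) ∂μ) ≠ ⊤ ∧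
    ∀ v, TorsAdm N p Ω v → (∫⁻ x, ENNReal.ofReal (|v x| ^ p) ∂μ) ≠ ⊤ →
      torsEnergy N p μ Ω w ≤ torsEnergy N p μ Ω v

/-- Weak convergence `wₙ ⇀ w` in (a surrogate of) `W^{1,p}₀(Ω)`. -/
def WeakW1pTendsto (N : ℕ) (p : ℝ) (w : ℕ → EuclideanSpace ℝ (Fin N) → ℝ)
    (w₀ : EuclideanSpace ℝ (Fin N) → ℝ) : Prop :=
  (∀ g : EuclideanSpace ℝ (Fin N) → ℝ,
      MeasureTheory.MemLp g (ENNReal.ofReal (p / (p - 1))) →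
      Tendsto (fun n => ∫ x, w n x * g x) atTop (𝓝 (∫ x, w₀ x * g x))) ∧
  (∀ G : EuclideanSpace ℝ (Fin N) → EuclideanSpace ℝ (Fin N),
      MeasureTheory.MemLp G (ENNReal.ofReal (p / (p - 1))) →
      Tendsto (fun n => ∫ x, fderiv ℝ (w n) x (G x)) atTop (𝓝 (∫ x, fderiv ℝ w₀ x (G x))))

/-- Local `γ`-convergence of measures: on every bounded open `Ω`, the torsion
functions converge weakly in `W^{1,p}₀(Ω)`. -/
def LocalGammaTendsto (N : ℕ) (p : ℝ) (μn : ℕ → Measure (EuclideanSpace ℝ (Fin N)))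
    (μ : Measure (EuclideanSpace ℝ (Fin N))) : Prop :=
  ∀ Ω : Set (EuclideanSpace ℝ (Fin N)), IsOpen Ω → Bornology.IsBounded Ω →
    ∀ (wn : ℕ → EuclideanSpace ℝ (Fin N) → ℝ) (w : EuclideanSpace ℝ (Fin N) → ℝ),
      (∀ n, IsTorsion N p (μn n) Ω (wn n)) → IsTorsion N p μ Ω w →
      WeakW1pTendsto N p wn w

/-- The density `V_μ` of the absolutely continuous part of `μ` on its set of
σ-finiteness `A_μ`, extended by `+∞` off `A_μ`. -/
noncomputable def Vmu (N : ℕ) (p : ℝ) (μ : Measure (EuclideanSpace ℝ (Fin N)))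
    (x : EuclideanSpace ℝ (Fin N)) : ℝ≥0∞ :=
  if x ∈ sigmaSet N p μ then (μ.restrict (sigmaSet N p μ)).rnDeriv volume x else ⊤


section AuxStmt17

variable {N : ℕ} {p : ℝ}

lemma pCap_mono17 {S T : Set (EuclideanSpace ℝ (Fin N))} (h : S ⊆ T) :
    pCap N p S ≤ pCap N p T := by
  unfold pCap
  refine le_iInf fun u => le_iInf fun hd => le_iInf fun hb => le_iInf fun hO => ?_
  obtain ⟨O, hO1, hO2, hO3⟩ := hO
  exact iInf_le_of_le u <| iInf_le_of_le hd <| iInf_le_of_le hb <|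
    iInf_le_of_le ⟨O, hO1, h.trans hO2, hO3⟩ le_rfl

lemma pCap_empty17 (hp : 0 < p) : pCap N p (∅ : Set (EuclideanSpace ℝ (Fin N))) = 0 := by
  refine le_antisymm ?_ zero_le
  unfold pCap
  refine iInf_le_of_le (fun _ => 0) <| iInf_le_of_le (differentiable_const 0) <|
    iInf_le_of_le (fun x => ⟨le_rfl, zero_le_one⟩) <|
    iInf_le_of_le ⟨∅, isOpen_empty, subset_rfl, fun x hx => absurd hx (Set.notMem_empty x)⟩ ?_
  have hz : ∀ x : EuclideanSpace ℝ (Fin N),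
      ENNReal.ofReal (‖fderiv ℝ (fun _ => (0:ℝ)) x‖ ^ p + |(0:ℝ)| ^ p) = (fun _ => (0:ℝ≥0∞)) x := by
    intro x
    have h0 : fderiv ℝ (fun _ : EuclideanSpace ℝ (Fin N) => (0:ℝ)) x = 0 := fderiv_const_apply 0
    rw [h0]
    simp [Real.zero_rpow hp.ne']
  rw [lintegral_congr hz, lintegral_zero]

lemma pCap_ball_lt_top17 (hp : 0 < p) (x : EuclideanSpace ℝ (Fin N)) :
    pCap N p (Metric.ball x 1) < ⊤ := by
  set f : ContDiffBump x := ⟨1, 2, one_pos, one_lt_two⟩ with hf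
  have hcd : ContDiff ℝ 1 (f : EuclideanSpace ℝ (Fin N) → ℝ) := f.contDiff
  have hcont : Continuous (fderiv ℝ (f : EuclideanSpace ℝ (Fin N) → ℝ)) :=
    hcd.continuous_fderiv one_ne_zero
  obtain ⟨Cb, hCb⟩ := (isCompact_closedBall x 2).exists_bound_of_continuousOn hcont.continuousOn
  set M : ℝ := max Cb 0 with hM
  set K : ℝ≥0∞ := ENNReal.ofReal (M ^ p + 1) with hK
  have hle : pCap N p (Metric.ball x 1) ≤
      ∫⁻ y, ENNReal.ofReal (‖fderiv ℝ f y‖ ^ p + |f y| ^ p) := by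
    unfold pCap
    exact iInf_le_of_le f <| iInf_le_of_le (hcd.differentiable one_ne_zero) <|
      iInf_le_of_le (fun y => ⟨f.nonneg, f.le_one⟩) <|
      iInf_le_of_le ⟨Metric.ball x 1, Metric.isOpen_ball, subset_rfl,
        fun y hy => f.one_of_mem_closedBall (Metric.ball_subset_closedBall hy)⟩ le_rfl
  refine lt_of_le_of_lt hle ?_
  have hbound : ∀ y, ENNReal.ofReal (‖fderiv ℝ f y‖ ^ p + |f y| ^ p)
      ≤ (Metric.closedBall x 2).indicator (fun _ => K) y := by
    intro y
    by_cases hy : y ∈ Metric.closedBall x 2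
    · rw [Set.indicator_of_mem hy]
      apply ENNReal.ofReal_le_ofReal
      have h1 : ‖fderiv ℝ f y‖ ^ p ≤ M ^ p :=
        Real.rpow_le_rpow (norm_nonneg _) ((hCb y hy).trans (le_max_left _ _)) hp.le
      have h2 : |f y| ^ p ≤ 1 :=
        Real.rpow_le_one (abs_nonneg _) (by rw [abs_of_nonneg f.nonneg]; exact f.le_one) hp.le
      linarith
    · have hy' : y ∉ tsupport (f : EuclideanSpace ℝ (Fin N) → ℝ) := by
        rw [f.tsupport_eq]; exact hy
      have h0 : f y = 0 := image_eq_zero_of_notMem_tsupport hy'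
      have h0' : fderiv ℝ f y = 0 := by
        by_contra h
        exact hy' (support_fderiv_subset ℝ (by simpa [Function.mem_support] using h))
      rw [Set.indicator_of_notMem hy, h0, h0']
      simp [Real.zero_rpow hp.ne']
  calc ∫⁻ y, ENNReal.ofReal (‖fderiv ℝ f y‖ ^ p + |f y| ^ p)
      ≤ ∫⁻ y, (Metric.closedBall x 2).indicator (fun _ => K) y := lintegral_mono hbound
    _ = K * volume (Metric.closedBall x 2) := by
        rw [lintegral_indicator measurableSet_closedBall, setLIntegral_const]
    _ < ⊤ := ENNReal.mul_lt_top (by rw [hK]; exact ENNReal.ofReal_lt_top)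
        measure_closedBall_lt_top

lemma isFinelyOpen_of_isOpen17 (hp : 1 < p) {W : Set (EuclideanSpace ℝ (Fin N))}
    (hW : IsOpen W) : IsFinelyOpen N p W := by
  intro x hx
  have hp0 : (0:ℝ) < p := zero_lt_one.trans hp
  have hp1 : (0:ℝ) < p - 1 := by linarith
  have hq : 0 < 1 / (p - 1) := by positivity
  obtain ⟨δ₀, hδ₀, hball₀⟩ := Metric.isOpen_iff.1 hW x hx
  set δ : ℝ := min δ₀ 1 / 2 with hδdef
  have hmin : 0 < min δ₀ 1 := lt_min hδ₀ one_pos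
  have hδpos : 0 < δ := by rw [hδdef]; linarith
  have hδ1 : δ < 1 := by
    have h1 : min δ₀ 1 ≤ 1 := min_le_right _ _
    rw [hδdef]; linarith
  have hδδ₀ : δ ≤ δ₀ := by
    have h1 : min δ₀ 1 ≤ δ₀ := min_le_left _ _
    rw [hδdef]; linarith
  have hballδ : Metric.ball x δ ⊆ W := (Metric.ball_subset_ball hδδ₀).trans hball₀
  set c : ℝ := min (δ ^ ((N:ℝ) - p)) 1 with hc
  have hcpos : 0 < c := lt_min (Real.rpow_pos_of_pos hδpos _) one_pos
  set K : ℝ≥0∞ :=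
    (pCap N p (Metric.ball x 1) / ENNReal.ofReal c) ^ (1 / (p - 1)) / ENNReal.ofReal δ with hKdef
  have hKne : K ≠ ⊤ := by
    have h1 : pCap N p (Metric.ball x 1) / ENNReal.ofReal c ≠ ⊤ :=
      (ENNReal.div_lt_top (pCap_ball_lt_top17 hp0 x).ne
        (ENNReal.ofReal_pos.mpr hcpos).ne').ne
    have h2 : (pCap N p (Metric.ball x 1) / ENNReal.ofReal c) ^ (1 / (p - 1)) ≠ ⊤ :=
      ENNReal.rpow_ne_top_of_nonneg hq.le h1
    exact (ENNReal.div_lt_top h2 (ENNReal.ofReal_pos.mpr hδpos).ne').ne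
  have hbound : ∀ r ∈ Set.Ioo (0:ℝ) 1,
      (pCap N p (Metric.ball x r \ W) / ENNReal.ofReal (r ^ ((N:ℝ) - p))) ^ (1 / (p - 1))
        / ENNReal.ofReal r ≤ K := by
    intro r hr
    rcases lt_or_ge r δ with hrδ | hrδ
    · have hempty : Metric.ball x r \ W = ∅ :=
        Set.diff_eq_empty.mpr ((Metric.ball_subset_ball hrδ.le).trans hballδ)
      rw [hempty, pCap_empty17 hp0, ENNReal.zero_div, ENNReal.zero_rpow_of_pos hq,
        ENNReal.zero_div]
      exact zero_le
    · have hsub : pCap N p (Metric.ball x r \ W) ≤ pCap N p (Metric.ball x 1) :=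
        pCap_mono17 (Set.diff_subset.trans (Metric.ball_subset_ball hr.2.le))
      have hcr : ENNReal.ofReal c ≤ ENNReal.ofReal (r ^ ((N:ℝ) - p)) := by
        apply ENNReal.ofReal_le_ofReal
        rcases le_or_gt 0 ((N:ℝ) - p) with hNp | hNp
        · exact (min_le_left _ _).trans (Real.rpow_le_rpow hδpos.le hrδ hNp)
        · exact (min_le_right _ _).trans
            (Real.one_le_rpow_of_pos_of_le_one_of_nonpos hr.1 hr.2.le hNp.le)
      exact ENNReal.div_le_div
        (ENNReal.rpow_le_rpow (ENNReal.div_le_div hsub hcr) hq.le)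
        (ENNReal.ofReal_le_ofReal hrδ)
  have hint : ∫⁻ r in Set.Ioo (0:ℝ) 1,
      (pCap N p (Metric.ball x r \ W) / ENNReal.ofReal (r ^ ((N:ℝ) - p))) ^ (1 / (p - 1))
        / ENNReal.ofReal r ≤ K * volume (Set.Ioo (0:ℝ) 1) := by
    refine le_trans (setLIntegral_mono' measurableSet_Ioo hbound) ?_
    rw [setLIntegral_const]
  refine ne_of_lt (lt_of_le_of_lt hint ?_)
  rw [Real.volume_Ioo]
  exact ENNReal.mul_lt_top hKne.lt_top (by simp)

lemma mem_sigmaSet_of_isOpen17 (hp : 1 < p) {μ : Measure (EuclideanSpace ℝ (Fin N))}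
    {W : Set (EuclideanSpace ℝ (Fin N))} (hW : IsOpen W) (hμ : μ W < ⊤) {y}
    (hy : y ∈ W) : y ∈ sigmaSet N p μ :=
  ⟨W, ⟨hW.measurableSet, isFinelyOpen_of_isOpen17 hp hW, hμ⟩, hy⟩

end AuxStmt17

theorem stmt17 (N : ℕ) (p : ℝ) (hp : 1 < p)
    (Ω : Set (EuclideanSpace ℝ (Fin N))) (hΩ : IsOpen Ω)
    (V : EuclideanSpace ℝ (Fin N) → ℝ≥0∞) (hVmeas : Measurable V)
    -- V is p-quasi upper semicontinuous: its strict sublevel sets are p-quasi open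
    (husc : ∀ t : ℝ≥0∞, IsQuasiOpen N p {x ∈ Ω | V x < t}) :
    ∀ᵐ x ∂(volume.restrict Ω),
      Vmu N p ((volume.restrict Ω).withDensity V) x = V x  := by
  classical
  have hp0 : (0:ℝ) < p := zero_lt_one.trans hp
  set μ : Measure (EuclideanSpace ℝ (Fin N)) := (volume.restrict Ω).withDensity V with hμdef
  set S : Set (EuclideanSpace ℝ (Fin N)) := sigmaSet N p μ with hSdef
  set g : EuclideanSpace ℝ (Fin N) → ℝ≥0∞ := (μ.restrict S).rnDeriv volume with hgdef
  have hgmeas : Measurable g := Measure.measurable_rnDeriv _ _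
  -- Step 1: a.e. point of {V < n} ∩ Ω belongs to `sigmaSet`.
  have key : ∀ n : ℕ, ∃ Z : Set (EuclideanSpace ℝ (Fin N)), MeasurableSet Z ∧
      volume Z = 0 ∧ ∀ y ∈ {x ∈ Ω | V x < (n : ℝ≥0∞)}, y ∉ Z → y ∈ S := by
    intro n
    have hch : ∀ k : ℕ, ∃ u : EuclideanSpace ℝ (Fin N) → ℝ,
        Differentiable ℝ u ∧ (∀ z, 0 ≤ u z ∧ u z ≤ 1) ∧
        (∃ ω, IsOpen ({x ∈ Ω | V x < (n:ℝ≥0∞)} ∪ ω) ∧ ∀ z ∈ ω, u z = 1) ∧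
        ∫⁻ z, ENNReal.ofReal (‖fderiv ℝ u z‖ ^ p + |u z| ^ p) < (2⁻¹ : ℝ≥0∞) ^ k := by
      intro k
      obtain ⟨ω, hωopen, hωcap, hUopen⟩ := husc (n:ℝ≥0∞) ((2⁻¹ : ℝ≥0∞) ^ k)
        (ENNReal.pow_pos (ENNReal.inv_pos.mpr ENNReal.ofNat_ne_top) k)
      unfold pCap at hωcap
      obtain ⟨u, hu⟩ := iInf_lt_iff.mp hωcap
      obtain ⟨hud, hu⟩ := iInf_lt_iff.mp hu
      obtain ⟨hub, hu⟩ := iInf_lt_iff.mp hu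
      obtain ⟨⟨O, hOopen, hωO, hOone⟩, hu⟩ := iInf_lt_iff.mp hu
      exact ⟨u, hud, hub, ⟨ω, hUopen, fun z hz => hOone z (hωO hz)⟩, hu⟩
    choose u hud hub hω hEn using hch
    choose ω hωopen hωone using hω
    set C : ℕ → Set (EuclideanSpace ℝ (Fin N)) := fun k => {z | (1/2 : ℝ) ≤ u k z} with hC
    have hCclosed : ∀ k, IsClosed (C k) := fun k =>
      isClosed_le continuous_const (hud k).continuous
    have hc0 : ENNReal.ofReal ((1/2:ℝ) ^ p) ≠ 0 :=
      (ENNReal.ofReal_pos.mpr (Real.rpow_pos_of_pos (by norm_num) p)).ne'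
    have hCvol : ∀ k, volume (C k) ≤ (2⁻¹:ℝ≥0∞) ^ k / ENNReal.ofReal ((1/2:ℝ) ^ p) := by
      intro k
      have hmul : ENNReal.ofReal ((1/2:ℝ) ^ p) * volume (C k) ≤ (2⁻¹:ℝ≥0∞) ^ k := by
        rw [← setLIntegral_const (C k) (ENNReal.ofReal ((1/2:ℝ) ^ p))]
        refine le_trans (le_trans (setLIntegral_mono' (hCclosed k).measurableSet
          fun z hz => ?_) (setLIntegral_le_lintegral _ _)) (hEn k).le
        refine ENNReal.ofReal_le_ofReal ?_
        have h2 : (1/2:ℝ) ^ p ≤ |u k z| ^ p := by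
          refine Real.rpow_le_rpow (by norm_num) ?_ hp0.le
          rw [abs_of_nonneg (hub k z).1]; exact hz
        have h3 : (0:ℝ) ≤ ‖fderiv ℝ (u k) z‖ ^ p := Real.rpow_nonneg (norm_nonneg _) p
        linarith
      rw [ENNReal.le_div_iff_mul_le (Or.inl hc0) (Or.inl ENNReal.ofReal_ne_top), mul_comm]
      exact hmul
    refine ⟨⋂ k, C k, MeasurableSet.iInter fun k => (hCclosed k).measurableSet, ?_, ?_⟩
    · by_contra hZ
      obtain ⟨k, hk⟩ := ENNReal.exists_inv_two_pow_lt
        (mul_ne_zero hZ hc0 : volume (⋂ k, C k) * ENNReal.ofReal ((1/2:ℝ) ^ p) ≠ 0)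
      have hle := le_trans (measure_mono (Set.iInter_subset _ k)) (hCvol k)
      have hlt : (2⁻¹:ℝ≥0∞) ^ k / ENNReal.ofReal ((1/2:ℝ) ^ p) < volume (⋂ k, C k) := by
        rw [ENNReal.div_lt_iff (Or.inl hc0) (Or.inl ENNReal.ofReal_ne_top)]
        exact hk
      exact absurd (lt_of_le_of_lt hle hlt) (lt_irrefl _)
    · intro y hy hyZ
      rw [Set.mem_iInter] at hyZ
      push_neg at hyZ
      obtain ⟨k, hk⟩ := hyZ
      have hyO : y ∈ ({x ∈ Ω | V x < (n:ℝ≥0∞)} ∪ ω k) ∩ (C k)ᶜ := ⟨Or.inl hy, hk⟩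
      obtain ⟨δ, hδpos, hball⟩ := Metric.isOpen_iff.1
        ((hωopen k).inter (hCclosed k).isOpen_compl) y hyO
      have hsubA : Metric.ball y δ ⊆ {x ∈ Ω | V x < (n:ℝ≥0∞)} := by
        intro z hz
        rcases (hball hz).1 with hzA | hzω
        · exact hzA
        · exact absurd (show (1/2:ℝ) ≤ u k z by rw [hωone k z hzω]; norm_num) (hball hz).2
      have hμball : μ (Metric.ball y δ) < ⊤ := by
        have hsubΩ : Metric.ball y δ ⊆ Ω := fun z hz => (hsubA hz).1
        rw [hμdef, withDensity_apply _ measurableSet_ball,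
          Measure.restrict_restrict measurableSet_ball,
          Set.inter_eq_self_of_subset_left hsubΩ]
        calc ∫⁻ z in Metric.ball y δ, V z ∂volume
            ≤ ∫⁻ _ in Metric.ball y δ, (n:ℝ≥0∞) ∂volume :=
              setLIntegral_mono' measurableSet_ball fun z hz => (hsubA hz).2.le
          _ = (n:ℝ≥0∞) * volume (Metric.ball y δ) := setLIntegral_const _ _
          _ < ⊤ := ENNReal.mul_lt_top
              (ENNReal.natCast_ne_top n).lt_top measure_ball_lt_top
      exact mem_sigmaSet_of_isOpen17 hp Metric.isOpen_ball hμball (Metric.mem_ball_self hδpos)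
  choose Zn hZnm hZn0 hZnS using key
  set Zall : Set (EuclideanSpace ℝ (Fin N)) := ⋃ n, Zn n with hZall
  have hZallm : MeasurableSet Zall := MeasurableSet.iUnion hZnm
  have hZall0 : volume Zall = 0 := measure_iUnion_null hZn0
  -- Lebesgue decomposition of μ.restrict S with respect to volume
  have hdec : μ.restrict S = (μ.restrict S).singularPart volume + volume.withDensity g :=
    (μ.restrict S).haveLebesgueDecomposition_add volume
  set σ : Measure (EuclideanSpace ℝ (Fin N)) := (μ.restrict S).singularPart volume with hσdef
  have hsing : σ ⟂ₘ volume := Measure.mutuallySingular_singularPart _ _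
  obtain ⟨sset, hsm, hσsset, hvolsset⟩ := hsing
  -- the sets on which we identify g with V
  set A : ℕ → Set (EuclideanSpace ℝ (Fin N)) := fun n => {x ∈ Ω | V x < (n:ℝ≥0∞)} with hA
  have hAmeas : ∀ n, MeasurableSet (A n) := fun n =>
    hΩ.measurableSet.inter (hVmeas measurableSet_Iio)
  set Λ : ℕ → ℕ → Set (EuclideanSpace ℝ (Fin N)) := fun n m =>
    ((A n \ Zall) ∩ Metric.ball 0 m) ∩ sset with hΛ
  have hΛmeas : ∀ n m, MeasurableSet (Λ n m) := fun n m =>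
    (((hAmeas n).diff hZallm).inter measurableSet_ball).inter hsm
  have hΛsubS : ∀ n m, Λ n m ⊆ S := fun n m z hz =>
    hZnS n z hz.1.1.1 fun hmem => hz.1.1.2 (Set.mem_iUnion.mpr ⟨n, hmem⟩)
  have hΛsubΩ : ∀ n m, Λ n m ⊆ Ω := fun n m z hz => hz.1.1.1.1
  have hΛball : ∀ n m, Λ n m ⊆ Metric.ball (0:EuclideanSpace ℝ (Fin N)) m :=
    fun n m z hz => hz.1.2
  have hI : ∀ n m : ℕ, ∀ᵐ z ∂volume, z ∈ Λ n m → g z = V z := by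
    intro n m
    rw [← ae_restrict_iff' (hΛmeas n m)]
    haveI : IsFiniteMeasure (volume.restrict (Λ n m)) := ⟨by
      rw [Measure.restrict_apply_univ]
      exact lt_of_le_of_lt (measure_mono (hΛball n m)) measure_ball_lt_top⟩
    refine ae_eq_of_forall_setLIntegral_eq_of_sigmaFinite hgmeas hVmeas fun s hs _ => ?_
    rw [Measure.restrict_restrict hs]
    have hBmeas : MeasurableSet (s ∩ Λ n m) := hs.inter (hΛmeas n m)
    have hBS : s ∩ Λ n m ⊆ S := fun z hz => hΛsubS n m hz.2
    have hBsset : s ∩ Λ n m ⊆ sset := fun z hz => hz.2.2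
    have hBΩ : s ∩ Λ n m ⊆ Ω := fun z hz => hΛsubΩ n m hz.2
    have h1 : (μ.restrict S) (s ∩ Λ n m) = ∫⁻ z in s ∩ Λ n m, g z ∂volume := by
      rw [hdec, Measure.add_apply, withDensity_apply _ hBmeas]
      have hσ0 : σ (s ∩ Λ n m) = 0 := measure_mono_null hBsset hσsset
      rw [hσ0, zero_add]
    have h2 : (μ.restrict S) (s ∩ Λ n m) = ∫⁻ z in s ∩ Λ n m, V z ∂volume := by
      rw [Measure.restrict_apply hBmeas, Set.inter_eq_self_of_subset_left hBS, hμdef,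
        withDensity_apply _ hBmeas, Measure.restrict_restrict hBmeas,
        Set.inter_eq_self_of_subset_left hBΩ]
    rw [← h1, h2]
  -- on the non-sigma-finite part, g = ⊤ a.e. on S
  set B2 : ℕ → ℕ → Set (EuclideanSpace ℝ (Fin N)) := fun n m =>
    (((Ω ∩ {z | V z = ⊤}) ∩ {z | g z ≤ (n:ℝ≥0∞)}) ∩ Metric.ball 0 m) ∩ sset with hB2
  have hB2meas : ∀ n m, MeasurableSet (B2 n m) := fun n m =>
    (((hΩ.measurableSet.inter (hVmeas (measurableSet_singleton ⊤))).inter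
      (hgmeas measurableSet_Iic)).inter measurableSet_ball).inter hsm
  have hII : ∀ n m : ℕ, volume (B2 n m ∩ S) = 0 := by
    intro n m
    by_contra hne
    have h1 : (μ.restrict S) (B2 n m) < ⊤ := by
      rw [hdec, Measure.add_apply]
      have hσB : σ (B2 n m) = 0 := measure_mono_null (fun z hz => hz.2) hσsset
      rw [hσB, zero_add, withDensity_apply _ (hB2meas n m)]
      calc ∫⁻ z in B2 n m, g z ∂volume ≤ ∫⁻ _ in B2 n m, (n:ℝ≥0∞) ∂volume :=
            setLIntegral_mono' (hB2meas n m) fun z hz => hz.1.1.2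
        _ = (n:ℝ≥0∞) * volume (B2 n m) := setLIntegral_const _ _
        _ < ⊤ := ENNReal.mul_lt_top (ENNReal.natCast_ne_top n).lt_top
            (lt_of_le_of_lt (measure_mono fun z hz => hz.1.2) measure_ball_lt_top)
    have h2 : (μ.restrict S) (B2 n m) = μ (B2 n m ∩ S) :=
      Measure.restrict_apply (hB2meas n m)
    have hHmeas : MeasurableSet (toMeasurable μ (B2 n m ∩ S) ∩ B2 n m) :=
      (measurableSet_toMeasurable _ _).inter (hB2meas n m)
    have hBSH : B2 n m ∩ S ⊆ toMeasurable μ (B2 n m ∩ S) ∩ B2 n m :=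
      Set.subset_inter (subset_toMeasurable _ _) Set.inter_subset_left
    have hμH : μ (toMeasurable μ (B2 n m ∩ S) ∩ B2 n m) ≤ μ (B2 n m ∩ S) :=
      le_trans (measure_mono Set.inter_subset_left) (measure_toMeasurable _).le
    have hHtop : μ (toMeasurable μ (B2 n m ∩ S) ∩ B2 n m) = ⊤ := by
      have hHΩ : toMeasurable μ (B2 n m ∩ S) ∩ B2 n m ⊆ Ω := fun z hz => hz.2.1.1.1.1
      rw [hμdef, withDensity_apply _ hHmeas, Measure.restrict_restrict hHmeas,
        Set.inter_eq_self_of_subset_left hHΩ]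
      have hcongr : ∫⁻ z in toMeasurable μ (B2 n m ∩ S) ∩ B2 n m, V z ∂volume
          = ∫⁻ _ in toMeasurable μ (B2 n m ∩ S) ∩ B2 n m, (⊤:ℝ≥0∞) ∂volume :=
        setLIntegral_congr_fun hHmeas (fun z hz => hz.2.1.1.1.2)
      rw [hcongr, setLIntegral_const]
      have hvle : volume (B2 n m ∩ S) ≤ volume (toMeasurable μ (B2 n m ∩ S) ∩ B2 n m) :=
        measure_mono hBSH
      exact ENNReal.top_mul fun h0 => hne (le_antisymm (h0 ▸ hvle) zero_le)
    have htop2 : μ (B2 n m ∩ S) = ⊤ := top_le_iff.mp (hHtop.symm.trans_le hμH)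
    rw [h2, htop2] at h1
    exact absurd h1 (lt_irrefl _)
  -- collect the a.e. statements and conclude
  have hae1 : ∀ᵐ z ∂volume, z ∉ Zall := measure_eq_zero_iff_ae_notMem.mp hZall0
  have hae2 : ∀ᵐ z ∂volume, z ∈ sset := by
    have h := measure_eq_zero_iff_ae_notMem.mp hvolsset
    filter_upwards [h] with z hz
    simpa using hz
  have hae3 : ∀ᵐ z ∂volume, ∀ n m : ℕ, z ∈ Λ n m → g z = V z := by
    rw [ae_all_iff]; intro n; rw [ae_all_iff]; intro m; exact hI n m
  have hae4 : ∀ᵐ z ∂volume, ∀ n m : ℕ, z ∉ B2 n m ∩ S := by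
    rw [ae_all_iff]; intro n; rw [ae_all_iff]; intro m
    exact measure_eq_zero_iff_ae_notMem.mp (hII n m)
  rw [ae_restrict_iff' hΩ.measurableSet]
  filter_upwards [hae1, hae2, hae3, hae4] with z hz1 hz2 hz3 hz4 hzΩ
  by_cases hV : V z = ⊤
  · by_cases hzS : z ∈ S
    · have hVmu : Vmu N p μ z = g z := by
        simp only [Vmu]
        rw [if_pos hzS]
      rw [hVmu, hV]
      by_contra hgz
      obtain ⟨n, hn⟩ := ENNReal.exists_nat_gt hgz
      obtain ⟨m, hm⟩ := exists_nat_gt ‖z‖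
      exact hz4 n m ⟨⟨⟨⟨⟨hzΩ, hV⟩, hn.le⟩, mem_ball_zero_iff.mpr hm⟩, hz2⟩, hzS⟩
    · simp only [Vmu]
      rw [if_neg hzS, hV]
  · obtain ⟨n, hn⟩ := ENNReal.exists_nat_gt hV
    have hzA : z ∈ A n := ⟨hzΩ, hn⟩
    have hzS : z ∈ S := hZnS n z hzA fun hmem => hz1 (Set.mem_iUnion.mpr ⟨n, hmem⟩)
    obtain ⟨m, hm⟩ := exists_nat_gt ‖z‖
    have hzΛ : z ∈ Λ n m :=
      ⟨⟨⟨hzA, fun h => hz1 h⟩, mem_ball_zero_iff.mpr hm⟩, hz2⟩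
    have hVmu : Vmu N p μ z = g z := by
      simp only [Vmu]
      rw [if_pos hzS]
    rw [hVmu]
    exact hz3 n m hzΛ
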